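/- There exist infinitely many pairwise non-isomorphic atomic Puiseux monoids P such that 0 is not a limit point of P and ρ_k(P) = ∞ for every k ≥ 2. -/

import Mathlib

/-- A Puiseux monoid: an additive submonoid of ℚ consisting of nonnegative rationals. -/
def PM.Puiseux (P : AddSubmonoid ℚ) : Prop := ∀ x ∈ P, 0 ≤ x

/-- `a` is an atom of `P`. -/
def PM.IsAtom (P : AddSubmonoid ℚ) (a : ℚ) : Prop :=
  a ∈ P ∧ a ≠ 0 ∧ ∀ x ∈ P, ∀ y ∈ P, a = x + y → x = 0 ∨ y = 0

/-- A factorization of `x` is a multiset of atoms of `P` summing to `x`. -/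
def PM.IsFactorization (P : AddSubmonoid ℚ) (x : ℚ) (z : Multiset ℚ) : Prop :=
  (∀ a ∈ z, PM.IsAtom P a) ∧ z.sum = x

/-- The set of lengths of `x`. -/
def PM.Lengths (P : AddSubmonoid ℚ) (x : ℚ) : Set ℕ :=
  {n | ∃ z : Multiset ℚ, PM.IsFactorization P x z ∧ Multiset.card z = n}

/-- `P` is atomic: it is generated by its set of atoms. -/
def PM.Atomic (P : AddSubmonoid ℚ) : Prop :=
  AddSubmonoid.closure {a | PM.IsAtom P a} = P

/-- The union of sets of lengths `U_k(P)`. -/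
def PM.U (P : AddSubmonoid ℚ) (k : ℕ) : Set ℕ :=
  {l | ∃ x ∈ P, k ∈ PM.Lengths P x ∧ l ∈ PM.Lengths P x}

namespace PMaux

/-- "large" atom with small fractional part. -/
noncomputable def A (p m : ℕ) : ℚ := (m : ℚ) + ((p:ℚ)^m)⁻¹
/-- "large" atom with fractional part close to 1. -/
noncomputable def B (p m : ℕ) : ℚ := (m : ℚ) + 1 - ((p:ℚ)^m)⁻¹

def gens (p : ℕ) : Set ℚ :=
  {x | x = 1 ∨ ∃ m : ℕ, 1 ≤ m ∧ (x = A p m ∨ x = B p m)}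

noncomputable def P (p : ℕ) : AddSubmonoid ℚ := AddSubmonoid.closure (gens p)

variable {p : ℕ}

lemma one_le_cast (hp : 2 ≤ p) : (1:ℚ) ≤ (p:ℚ) := by exact_mod_cast Nat.one_le_of_lt hp

lemma gen_ge_one (hp : 2 ≤ p) {x : ℚ} (hx : x ∈ gens p) : 1 ≤ x := by
  have hppos : (1:ℚ) ≤ (p:ℚ) := one_le_cast hp
  rcases hx with h1 | ⟨m, hm, h | h⟩
  · simp [h1]
  · have : (0:ℚ) ≤ ((p:ℚ)^m)⁻¹ := by positivity
    have hm' : (1:ℚ) ≤ (m:ℚ) := by exact_mod_cast hm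
    rw [h, A]; linarith
  · have h1le : (1:ℚ) ≤ (p:ℚ)^m := one_le_pow₀ hppos
    have : ((p:ℚ)^m)⁻¹ ≤ 1 := inv_le_one_of_one_le₀ h1le
    have hm' : (1:ℚ) ≤ (m:ℚ) := by exact_mod_cast hm
    rw [h, B]; linarith

def lowerBd : AddSubmonoid ℚ where
  carrier := {x : ℚ | x = 0 ∨ 1 ≤ x}
  add_mem' := by
    rintro a b (rfl | ha) (rfl | hb)
    · exact Or.inl (by simp)
    · exact Or.inr (by simpa using hb)
    · exact Or.inr (by simpa using ha)
    · exact Or.inr (by linarith)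
  zero_mem' := Or.inl rfl

/-- every nonzero element of `P p` is at least 1 -/
lemma mem_cases (hp : 2 ≤ p) {x : ℚ} (hx : x ∈ P p) : x = 0 ∨ 1 ≤ x := by
  have : P p ≤ lowerBd := by
    apply AddSubmonoid.closure_le.2
    intro g hg
    exact Or.inr (gen_ge_one hp hg)
  exact this hx


lemma cast_pos (hp : 2 ≤ p) : (0:ℚ) < (p:ℚ) := lt_of_lt_of_le one_pos (one_le_cast hp)

lemma pow_ne (hp : 2 ≤ p) (m : ℕ) : ((p:ℚ)^m) ≠ 0 := by
  have := cast_pos hp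
  positivity

/-- generators with all indices ≤ e become integers after multiplying by p^e -/
lemma gen_mul_int (hp : 2 ≤ p) {g : ℚ} (hg : g ∈ gens p) (e : ℕ)
    (hsmall : ∀ j, e < j → g ≠ A p j ∧ g ≠ B p j) :
    ∃ z : ℤ, g * (p:ℚ)^e = (z:ℚ) := by
  have hpne : (p:ℚ) ≠ 0 := ne_of_gt (cast_pos hp)
  rcases hg with h1 | ⟨m, hm, h | h⟩
  · exact ⟨(p:ℤ)^e, by rw [h1]; push_cast; ring⟩
  · have hme : m ≤ e := by
      by_contra hlt
      exact (hsmall m (by omega)).1 h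
    refine ⟨(m : ℤ) * (p:ℤ)^e + (p:ℤ)^(e - m), ?_⟩
    have hsplit : (p:ℚ)^e = (p:ℚ)^(e-m) * (p:ℚ)^m := by
      rw [← pow_add]; congr 1; omega
    rw [h, A, add_mul, hsplit]
    push_cast
    field_simp
    rw [hsplit]; ring
  · have hme : m ≤ e := by
      by_contra hlt
      exact (hsmall m (by omega)).2 h
    refine ⟨((m : ℤ) + 1) * (p:ℤ)^e - (p:ℤ)^(e - m), ?_⟩
    have hsplit : (p:ℚ)^e = (p:ℚ)^(e-m) * (p:ℚ)^m := by
      rw [← pow_add]; congr 1; omega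
    rw [h, B, sub_mul, add_mul, hsplit]
    push_cast
    field_simp
    rw [hsplit]; ring

lemma sum_mul_int (hp : 2 ≤ p) (e : ℕ) (l : Multiset ℚ)
    (hl : ∀ g ∈ l, g ∈ gens p)
    (hsmall : ∀ g ∈ l, ∀ j, e < j → g ≠ A p j ∧ g ≠ B p j) :
    ∃ z : ℤ, l.sum * (p:ℚ)^e = (z:ℚ) := by
  induction l using Multiset.induction_on with
  | empty => exact ⟨0, by simp⟩
  | cons a t ih =>
    obtain ⟨z, hz⟩ := gen_mul_int hp (hl a (Multiset.mem_cons_self a t)) e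
      (hsmall a (Multiset.mem_cons_self a t))
    obtain ⟨w, hw⟩ := ih (fun g hg => hl g (Multiset.mem_cons_of_mem hg))
      (fun g hg => hsmall g (Multiset.mem_cons_of_mem hg))
    exact ⟨z + w, by rw [Multiset.sum_cons, add_mul, hz, hw]; push_cast; ring⟩

lemma inv_not_int (hp : 2 ≤ p) (w : ℤ) (hsign : (p:ℚ)⁻¹ = (w:ℚ) ∨ (p:ℚ)⁻¹ = -(w:ℚ)) : False := by
  have hpne : (p:ℚ) ≠ 0 := ne_of_gt (cast_pos hp)
  have h1 : (p:ℚ)⁻¹ < 1 := by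
    rw [inv_lt_one_iff₀]
    right
    exact_mod_cast Nat.lt_of_lt_of_le one_lt_two hp
  have h0 : 0 < (p:ℚ)⁻¹ := by
    have := cast_pos hp; positivity
  rcases hsign with h | h
  · have hw0 : (0:ℤ) < w := by exact_mod_cast h ▸ h0
    have hw1 : (w:ℚ) < 1 := h ▸ h1
    have : (1:ℤ) ≤ w := hw0
    have : (1:ℚ) ≤ (w:ℚ) := by exact_mod_cast this
    linarith
  · have hw0 : (0:ℤ) < -w := by
      have : (0:ℚ) < (-w : ℤ) := by push_cast; linarith [h ▸ h0]
      exact_mod_cast this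
    have hw1 : ((-w : ℤ):ℚ) < 1 := by push_cast; linarith [h ▸ h1]
    have : (1:ℤ) ≤ -w := hw0
    have : (1:ℚ) ≤ ((-w:ℤ):ℚ) := by exact_mod_cast this
    linarith

lemma A_mul_not_int (hp : 2 ≤ p) {m : ℕ} (hm : 1 ≤ m) (z : ℤ) :
    A p m * (p:ℚ)^(m-1) ≠ (z:ℚ) := by
  intro h
  have hsplit : (p:ℚ)^m = (p:ℚ)^(m-1) * (p:ℚ) := by
    rw [← pow_succ]; congr 1; omega
  have hval : A p m * (p:ℚ)^(m-1) = (m:ℚ) * (p:ℚ)^(m-1) + (p:ℚ)⁻¹ := by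
    rw [A, add_mul, hsplit, mul_inv]
    field_simp
  have : (p:ℚ)⁻¹ = ((z - (m:ℤ) * (p:ℤ)^(m-1) : ℤ) : ℚ) := by
    rw [hval] at h; push_cast; linarith
  exact inv_not_int hp _ (Or.inl this)

lemma B_mul_not_int (hp : 2 ≤ p) {m : ℕ} (hm : 1 ≤ m) (z : ℤ) :
    B p m * (p:ℚ)^(m-1) ≠ (z:ℚ) := by
  intro h
  have hsplit : (p:ℚ)^m = (p:ℚ)^(m-1) * (p:ℚ) := by
    rw [← pow_succ]; congr 1; omega
  have hval : B p m * (p:ℚ)^(m-1) = ((m:ℚ)+1) * (p:ℚ)^(m-1) - (p:ℚ)⁻¹ := by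
    rw [B, sub_mul, add_mul, hsplit, mul_inv]
    field_simp
  have : (p:ℚ)⁻¹ = -((z - ((m:ℤ)+1) * (p:ℤ)^(m-1) : ℤ) : ℚ) := by
    rw [hval] at h; push_cast; linarith
  exact inv_not_int hp _ (Or.inr this)


lemma inv_pow_lt_one (hp : 2 ≤ p) {j : ℕ} (hj : 1 ≤ j) : ((p:ℚ)^j)⁻¹ < 1 := by
  rw [inv_lt_one_iff₀]
  right
  have h2 : (2:ℚ) ≤ (p:ℚ) := by exact_mod_cast hp
  calc (1:ℚ) < 2 := one_lt_two
    _ ≤ (p:ℚ) := h2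
    _ = (p:ℚ)^1 := (pow_one _).symm
    _ ≤ (p:ℚ)^j := pow_le_pow_right₀ (by linarith) hj

lemma inv_pow_pos (hp : 2 ≤ p) (j : ℕ) : 0 < ((p:ℚ)^j)⁻¹ := by
  have := cast_pos hp; positivity

lemma gt_idx (hp : 2 ≤ p) {g : ℚ} {j : ℕ} (hj : 1 ≤ j) (h : g = A p j ∨ g = B p j) :
    (j:ℚ) < g := by
  rcases h with rfl | rfl
  · rw [A]; linarith [inv_pow_pos hp j]
  · rw [B]; linarith [inv_pow_lt_one hp hj]

lemma lt_succ_idx (hp : 2 ≤ p) {g : ℚ} {m : ℕ} (hm : 1 ≤ m) (h : g = A p m ∨ g = B p m) :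
    g < (m:ℚ) + 1 := by
  rcases h with rfl | rfl
  · rw [A]; linarith [inv_pow_lt_one hp hm]
  · rw [B]; linarith [inv_pow_pos hp m]

/-- a multiset of generators summing to something that is not an integer multiple of
p^{-e} must contain a generator of index > e. -/
lemma exists_big (hp : 2 ≤ p) (e : ℕ) (l : Multiset ℚ)
    (hl : ∀ g ∈ l, g ∈ gens p)
    (hni : ∀ z : ℤ, l.sum * (p:ℚ)^e ≠ (z:ℚ)) :
    ∃ h ∈ l, ∃ j, e < j ∧ (h = A p j ∨ h = B p j) := by
  by_contra hc
  push_neg at hc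
  obtain ⟨z, hz⟩ := sum_mul_int hp e l hl (by
    intro g hg j hj
    have := hc g hg j hj
    tauto)
  exact hni z hz

lemma gen_atom (hp : 2 ≤ p) {g : ℚ} (hg : g ∈ gens p) : PM.IsAtom (P p) g := by
  refine ⟨AddSubmonoid.subset_closure hg, ?_, ?_⟩
  · have := gen_ge_one hp hg
    intro h; rw [h] at this; norm_num at this
  · intro x hx y hy hsum
    by_contra hc
    push_neg at hc
    obtain ⟨hx0, hy0⟩ := hc
    have hx1 : 1 ≤ x := (mem_cases hp hx).resolve_left hx0
    have hy1 : 1 ≤ y := (mem_cases hp hy).resolve_left hy0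
    rcases hg with h1 | ⟨m, hm, hAB⟩
    · linarith [h1 ▸ hsum]
    · -- g = A p m or B p m with 1 ≤ m
      obtain ⟨lx, hlx, hlxs⟩ := AddSubmonoid.exists_multiset_of_mem_closure hx
      obtain ⟨ly, hly, hlys⟩ := AddSubmonoid.exists_multiset_of_mem_closure hy
      set l : Multiset ℚ := lx + ly with hldef
      have hlg : ∀ a ∈ l, a ∈ gens p := by
        intro a ha
        rcases Multiset.mem_add.1 ha with h | h
        · exact hlx a h
        · exact hly a h
      have hlsum : l.sum = g := by
        rw [hldef, Multiset.sum_add, hlxs, hlys, hsum]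
      have hni : ∀ z : ℤ, l.sum * (p:ℚ)^(m-1) ≠ (z:ℚ) := by
        rw [hlsum]
        rcases hAB with rfl | rfl
        · exact A_mul_not_int hp hm
        · exact B_mul_not_int hp hm
      obtain ⟨h, hhl, j, hje, hAB'⟩ := exists_big hp (m-1) l hlg hni
      have hjm : m ≤ j := by omega
      have hjq : (m:ℚ) ≤ (j:ℚ) := by exact_mod_cast hjm
      have hbig : (m:ℚ) < h := lt_of_le_of_lt hjq (gt_idx hp (by omega) hAB')
      -- the rest of the multiset is nonempty and has nonnegative sum ≥ ... 
      have hrest : l.sum = h + (l.erase h).sum := by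
        rw [← Multiset.sum_cons, Multiset.cons_erase hhl]
      -- rest contains at least one element since card l ≥ 2
      have hlx0 : lx ≠ 0 := by
        rintro rfl
        simp at hlxs
        exact hx0 hlxs.symm
      have hly0 : ly ≠ 0 := by
        rintro rfl
        simp at hlys
        exact hy0 hlys.symm
      have hcard : 2 ≤ Multiset.card l := by
        rw [hldef, Multiset.card_add]
        have h1 : 1 ≤ Multiset.card lx := by
          rwa [Nat.one_le_iff_ne_zero, Ne, Multiset.card_eq_zero]
        have h2 : 1 ≤ Multiset.card ly := by
          rwa [Nat.one_le_iff_ne_zero, Ne, Multiset.card_eq_zero]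
        omega
      obtain ⟨r, hr⟩ : ∃ r, r ∈ l.erase h := Multiset.card_pos_iff_exists_mem.1 (by
        rw [Multiset.card_erase_of_mem hhl, Nat.pred_eq_sub_one]
        omega)
      have hr1 : 1 ≤ r := gen_ge_one hp (hlg r (Multiset.mem_of_mem_erase hr))
      have hrsum : 1 ≤ (l.erase h).sum := by
        have : (l.erase h).sum = r + ((l.erase h).erase r).sum := by
          rw [← Multiset.sum_cons, Multiset.cons_erase hr]
        have hnn : 0 ≤ ((l.erase h).erase r).sum := by
          apply Multiset.sum_nonneg
          intro a ha
          have : a ∈ gens p := hlg a (Multiset.mem_of_mem_erase (Multiset.mem_of_mem_erase ha))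
          linarith [gen_ge_one hp this]
        linarith
      have hsmall : g < (m:ℚ) + 1 := lt_succ_idx hp hm hAB
      rw [← hlsum, hrest] at hsmall
      linarith

lemma puiseux (hp : 2 ≤ p) : PM.Puiseux (P p) := by
  intro x hx
  rcases mem_cases hp hx with rfl | h
  · exact le_refl 0
  · linarith

lemma atomic (hp : 2 ≤ p) : PM.Atomic (P p) := by
  apply le_antisymm
  · apply AddSubmonoid.closure_le.2
    intro a ha
    exact ha.1
  · rw [P]
    exact AddSubmonoid.closure_mono (fun g hg => gen_atom hp hg)


lemma one_mem_P : (1:ℚ) ∈ P p := AddSubmonoid.subset_closure (Or.inl rfl)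

lemma AB_sum (p n : ℕ) : A p n + B p n = 2*(n:ℚ) + 1 := by
  rw [A, B]; ring

lemma U_infinite (hp : 2 ≤ p) (k : ℕ) (hk : 2 ≤ k) : (PM.U (P p) k).Infinite := by
  apply Set.infinite_of_injective_forall_mem (f := fun m : ℕ => k + 2*m + 3)
    (hi := fun a b hab => by simp only [] at hab; omega)
  intro m
  set n : ℕ := m + 2 with hn
  have hx : ((k + 2*m + 3 : ℕ):ℚ) ∈ P p := by
    have := AddSubmonoid.nsmul_mem (P p) (one_mem_P (p := p)) (k + 2*m + 3)
    rwa [nsmul_eq_mul, mul_one] at this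
  refine ⟨((k + 2*m + 3 : ℕ):ℚ), hx, ?_, ?_⟩
  · -- factorization of length k
    refine ⟨Multiset.replicate (k-2) (1:ℚ) + (A p n ::ₘ {B p n}), ⟨?_, ?_⟩, ?_⟩
    · intro a ha
      rcases Multiset.mem_add.1 ha with h | h
      · rw [(Multiset.eq_of_mem_replicate h)]
        exact gen_atom hp (Or.inl rfl)
      · rcases Multiset.mem_cons.1 h with rfl | h'
        · exact gen_atom hp (Or.inr ⟨n, by omega, Or.inl rfl⟩)
        · rw [Multiset.mem_singleton.1 h']
          exact gen_atom hp (Or.inr ⟨n, by omega, Or.inr rfl⟩)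
    · rw [Multiset.sum_add, Multiset.sum_replicate, Multiset.sum_cons,
        Multiset.sum_singleton, AB_sum, nsmul_eq_mul, mul_one]
      have hcast : ((k - 2 : ℕ):ℚ) = (k:ℚ) - 2 := by
        push_cast [hk]
        ring
      rw [hcast, hn]
      push_cast
      ring
    · rw [Multiset.card_add, Multiset.card_replicate, Multiset.card_cons,
        Multiset.card_singleton]
      omega
  · -- factorization of length k + 2m + 3
    refine ⟨Multiset.replicate (k + 2*m + 3) (1:ℚ), ⟨?_, ?_⟩, ?_⟩
    · intro a ha
      rw [Multiset.eq_of_mem_replicate ha]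
      exact gen_atom hp (Or.inl rfl)
    · rw [Multiset.sum_replicate, nsmul_eq_mul, mul_one]
    · rw [Multiset.card_replicate]


/-- rationals whose denominator is a power of p -/
def denPow (p : ℕ) : AddSubmonoid ℚ where
  carrier := {x | ∃ M : ℕ, ∃ z : ℤ, x * (p:ℚ)^M = (z:ℚ)}
  zero_mem' := ⟨0, 0, by simp⟩
  add_mem' := by
    rintro a b ⟨M, z, hz⟩ ⟨N, w, hw⟩
    refine ⟨M + N, z * (p:ℤ)^N + w * (p:ℤ)^M, ?_⟩
    have : (a + b) * (p:ℚ)^(M+N) = (a * (p:ℚ)^M) * (p:ℚ)^N + (b * (p:ℚ)^N) * (p:ℚ)^M := by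
      rw [pow_add]; ring
    rw [this, hz, hw]
    push_cast
    ring

lemma P_le_denPow (hp : 2 ≤ p) : P p ≤ denPow p := by
  apply AddSubmonoid.closure_le.2
  rintro g (rfl | ⟨m, hm, rfl | rfl⟩)
  · exact ⟨0, 1, by simp⟩
  · refine ⟨m, (m:ℤ) * (p:ℤ)^m + 1, ?_⟩
    rw [A, add_mul, inv_mul_cancel₀ (pow_ne hp m)]
    push_cast
    ring
  · refine ⟨m, ((m:ℤ) + 1) * (p:ℤ)^m - 1, ?_⟩
    rw [B, sub_mul, add_mul, inv_mul_cancel₀ (pow_ne hp m)]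
    push_cast
    ring

variable {q : ℕ}

/-- any additive hom of Puiseux monoids is given by multiplication by a constant -/
lemma equiv_coe (hp : 2 ≤ p) (e : (P p) ≃+ (P q)) (x : (P p)) :
    ((e x : ℚ)) = ((e ⟨1, one_mem_P⟩ : ℚ)) * (x : ℚ) := by
  set c : ℚ := (e ⟨1, one_mem_P⟩ : ℚ) with hc
  set r : ℚ := (x : ℚ) with hr
  have hr0 : 0 ≤ r := by
    rcases mem_cases hp x.2 with h | h
    · rw [hr, h]
    · rw [hr]; linarith
  have hden : ((r.den : ℚ)) ≠ 0 := by
    exact_mod_cast r.den_ne_zero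
  have hnum : ((r.num.toNat : ℚ)) = (r.num : ℚ) := by
    exact_mod_cast Int.toNat_of_nonneg (Rat.num_nonneg.2 hr0)
  have hdr : (r.den : ℚ) * r = (r.num : ℚ) := by
    rw [mul_comm]
    exact (eq_div_iff hden).1 (Rat.num_div_den r).symm
  have hkey : (r.den) • x = (r.num.toNat) • (⟨1, one_mem_P⟩ : (P p)) := by
    apply Subtype.ext
    rw [AddSubmonoidClass.coe_nsmul, AddSubmonoidClass.coe_nsmul, nsmul_eq_mul,
      nsmul_eq_mul, mul_one, hnum, ← hr]
    exact hdr
  have happ := congrArg e hkey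
  rw [map_nsmul, map_nsmul] at happ
  have hcoe := congrArg (fun z : (P q) => (z : ℚ)) happ
  simp only [AddSubmonoidClass.coe_nsmul, nsmul_eq_mul] at hcoe
  -- hcoe : (r.den) * (e x) = (r.num.toNat) * c
  apply mul_left_cancel₀ hden
  rw [hcoe, hnum]
  rw [show (r.den : ℚ) * (c * r) = c * ((r.den : ℚ) * r) by ring, hdr]
  ring

lemma ne_zero_of_coe_one {S : AddSubmonoid ℚ} (h1 : (1:ℚ) ∈ S) : (⟨1, h1⟩ : S) ≠ 0 := by
  intro h
  have := congrArg (fun z : S => (z : ℚ)) h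
  simp at this

lemma le_of_equiv (hp : 2 ≤ p) (hq : 2 ≤ q) (e : (P p) ≃+ (P q)) : P p ≤ P q := by
  set c : ℚ := (e ⟨1, one_mem_P⟩ : ℚ) with hc
  -- c is a nonzero element of P q, hence ≥ 1
  have hcne : c ≠ 0 := by
    intro h
    apply ne_zero_of_coe_one (one_mem_P (p := p))
    apply e.injective
    rw [map_zero]
    exact Subtype.ext (by rw [ZeroMemClass.coe_zero]; exact h)
  have hc1 : 1 ≤ c := ((mem_cases hq (e ⟨1, one_mem_P⟩).2).resolve_left hcne)
  -- t = e.symm 1 is a nonzero element of P p, hence ≥ 1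
  set t : (P p) := e.symm ⟨1, one_mem_P⟩ with ht
  have htne : (t : ℚ) ≠ 0 := by
    intro h
    apply ne_zero_of_coe_one (one_mem_P (p := q))
    apply e.symm.injective
    rw [map_zero]
    exact Subtype.ext (by rw [ZeroMemClass.coe_zero]; exact h)
  have ht1 : 1 ≤ (t : ℚ) := ((mem_cases hp t.2).resolve_left htne)
  -- 1 = c * t
  have hct : (1:ℚ) = c * (t : ℚ) := by
    have := equiv_coe hp e t
    rwa [ht, e.apply_symm_apply] at this
  have hceq : c = 1 := by nlinarith
  intro x hx
  have := equiv_coe hp e ⟨x, hx⟩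
  rw [← hc, hceq, one_mul] at this
  have hmem := (e ⟨x, hx⟩).2
  rwa [this] at hmem

lemma prime_eq_of_le (hp : Nat.Prime p) (hq : Nat.Prime q) (hle : P p ≤ P q) : p = q := by
  have hA : A p 1 ∈ P q :=
    hle (AddSubmonoid.subset_closure (Or.inr ⟨1, le_refl 1, Or.inl rfl⟩))
  obtain ⟨M, z, hz⟩ := P_le_denPow hq.two_le hA
  have hpne : (p:ℚ) ≠ 0 := ne_of_gt (cast_pos hp.two_le)
  -- from hz : (1 + p⁻¹) * q^M = z, derive q^M = (z - q^M) * p over ℚ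
  have hkey : ((q:ℚ))^M = ((z - (q:ℤ)^M : ℤ) : ℚ) * (p:ℚ) := by
    rw [A, pow_one] at hz
    push_cast at hz ⊢
    field_simp at hz
    nlinarith [hz]
  have hkey' : ((q:ℤ))^M = (z - (q:ℤ)^M) * (p:ℤ) := by
    exact_mod_cast hkey
  have hdvd : (p:ℤ) ∣ (q:ℤ)^M := ⟨z - (q:ℤ)^M, by rw [mul_comm]; exact hkey'⟩
  have hdvdn : p ∣ q^M := by
    have : ((p:ℕ):ℤ) ∣ ((q^M : ℕ):ℤ) := by push_cast; exact hdvd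
    exact_mod_cast this
  exact (Nat.prime_dvd_prime_iff_eq hp hq).1 (hp.dvd_of_dvd_pow hdvdn)

end PMaux

theorem stmt9 :
    ∃ F : ℕ → AddSubmonoid ℚ,
      (∀ n : ℕ, PM.Puiseux (F n) ∧ PM.Atomic (F n) ∧
        (∃ q : ℚ, 0 < q ∧ ∀ x ∈ F n, x ≠ 0 → q ≤ x) ∧
        ∀ k ≥ 2, (PM.U (F n) k).Infinite) ∧
      ∀ i j : ℕ, Nonempty ((F i) ≃+ (F j)) → i = j := by
  refine ⟨fun n => PMaux.P (Nat.nth Nat.Prime n), fun n => ?_, fun i j h => ?_⟩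
  · have h2 : 2 ≤ Nat.nth Nat.Prime n := (Nat.prime_nth_prime n).two_le
    exact ⟨PMaux.puiseux h2, PMaux.atomic h2,
      ⟨1, one_pos, fun x hx hx0 => (PMaux.mem_cases h2 hx).resolve_left hx0⟩,
      fun k hk => PMaux.U_infinite h2 k hk⟩
  · obtain ⟨e⟩ := h
    have hpi : (Nat.nth Nat.Prime i).Prime := Nat.prime_nth_prime i
    have hpj : (Nat.nth Nat.Prime j).Prime := Nat.prime_nth_prime j
    have := PMaux.prime_eq_of_le hpi hpj (PMaux.le_of_equiv hpi.two_le hpj.two_le e)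
    exact Nat.nth_injective Nat.infinite_setOf_prime this
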